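/- arXiv:2111.10883 — 2 statements merged into one kernel-verified Lean document; each statement's English description precedes it below -/
import Mathlib

section
/- Let g : 𝔻 → ℂ be convex univalent and f₀ analytic on 𝔻 subordinate to g with f₀(0) = g(0) = 0, f₀(z) = Σ_{n≥1} a_n z^n. Then |a_n| ≤ |g'(0)| for every n ≥ 1, and consequently M_r(f₀) ≤ |g'(0)|·r/(1−r) for all r ∈ [0,1). -/
open Metric Filter Set Function Topology

noncomputable def majorant (a : ℕ → ℂ) (r : ℝ) : ENNReal :=
  ∑' n, (‖a n‖₊ : ENNReal) * (ENNReal.ofReal r) ^ n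

private lemma hasSum_finsetSum {ι : Type*} {s : Finset ι} {f : ι → ℕ → ℂ} {b : ι → ℂ}
    (h : ∀ i ∈ s, HasSum (f i) (b i)) :
    HasSum (fun m => ∑ i ∈ s, f i m) (∑ i ∈ s, b i) := by
  classical
  induction s using Finset.induction_on with
  | empty => simpa using hasSum_zero
  | insert _ _ hx ih =>
    rename_i i s'
    simp only [Finset.sum_insert hx]
    exact (h i (Finset.mem_insert_self i s')).add
      (ih fun j hj => h j (Finset.mem_insert_of_mem hj))

private lemma rog_ps {c : ℕ → ℂ} {G : ℂ → ℂ}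
    (h : ∀ w ∈ ball (0:ℂ) 1, HasSum (fun j => c j * w ^ j) (G w)) :
    HasFPowerSeriesOnBall G (FormalMultilinearSeries.ofScalars ℂ c) 0 1 := by
  refine ⟨?_, by norm_num, ?_⟩
  · refine ENNReal.le_of_forall_nnreal_lt fun ρ hρ => ?_
    have hρ1 : (ρ : ℝ) < 1 := by exact_mod_cast hρ
    have hw : ((ρ : ℝ) : ℂ) ∈ ball (0:ℂ) 1 := by
      rw [mem_ball_zero_iff, Complex.norm_real]
      simpa [abs_of_nonneg ρ.coe_nonneg] using hρ1
    apply FormalMultilinearSeries.le_radius_of_tendsto (l := 0)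
    have ht := ((h _ hw).summable.tendsto_atTop_zero).norm
    rw [norm_zero] at ht
    convert ht using 1
    funext j
    rw [FormalMultilinearSeries.ofScalars_norm, norm_mul, norm_pow, Complex.norm_real]
    rw [Real.norm_eq_abs, abs_of_nonneg ρ.coe_nonneg]
  · intro y hy
    have hy' : y ∈ ball (0:ℂ) 1 := by
      have : Metric.eball (0:ℂ) 1 = ball (0:ℂ) 1 := by
        simpa using Metric.emetric_ball_nnreal (x := (0:ℂ)) (ε := 1)
      rwa [← this]
    have hcoeff : ∀ j, (FormalMultilinearSeries.ofScalars ℂ c).coeff j = c j := fun j => by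
      simp [FormalMultilinearSeries.coeff, FormalMultilinearSeries.ofScalars, List.prod_ofFn]
    have := h y hy'
    simp only [FormalMultilinearSeries.apply_eq_pow_smul_coeff, hcoeff, smul_eq_mul, zero_add]
    simpa [mul_comm] using this

private lemma rog_inv (g : ℂ → ℂ) (hg : DifferentiableOn ℂ g (ball 0 1))
    (hginj : Set.InjOn g (ball 0 1)) :
    ∃ ψ : ℂ → ℂ, IsOpen (g '' ball 0 1) ∧ DifferentiableOn ℂ ψ (g '' ball 0 1) ∧
      (∀ z ∈ ball (0:ℂ) 1, ψ (g z) = z) ∧ ∀ w ∈ g '' ball 0 1, ψ w ∈ ball (0:ℂ) 1 := by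
  have hga : AnalyticOnNhd ℂ g (ball 0 1) := hg.analyticOnNhd isOpen_ball
  -- g is not constant on any small ball inside the unit ball
  have hnc : ∀ z₀ : ℂ, ∀ δ > (0:ℝ), ball z₀ δ ⊆ ball 0 1 →
      ¬ (∀ z ∈ ball z₀ δ, g z = g z₀) := by
    rintro z₀ δ hδ hsub hw
    have h1 : z₀ ∈ ball z₀ δ := mem_ball_self hδ
    have h2 : z₀ + ((δ/2 : ℝ) : ℂ) ∈ ball z₀ δ := by
      simp only [mem_ball, dist_eq_norm, add_sub_cancel_left, Complex.norm_real,
        Real.norm_eq_abs, abs_of_nonneg (by linarith : (0:ℝ) ≤ δ/2)]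
      linarith
    have := hginj (hsub h2) (hsub h1) (by rw [hw _ h2, hw _ h1])
    have hδ0 : ((δ/2 : ℝ) : ℂ) = 0 := by
      have := congrArg (· - z₀) this
      simpa using this
    rw [Complex.ofReal_eq_zero] at hδ0
    linarith
  -- open mapping
  have hopen : ∀ s ⊆ ball (0:ℂ) 1, IsOpen s → IsOpen (g '' s) := by
    refine (hga.is_constant_or_isOpen (convex_ball 0 1).isPreconnected).resolve_left ?_
    rintro ⟨w, hw⟩
    have h0 : (0:ℂ) ∈ ball (0:ℂ) 1 := by simp
    refine hnc 0 1 one_pos (by simp) fun z hz => ?_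
    rw [hw z (by simpa using hz), hw 0 h0]
  have hΩopen : IsOpen (g '' ball 0 1) := hopen _ Subset.rfl isOpen_ball
  set ψ := Function.invFunOn g (ball 0 1) with hψdef
  have hleft : ∀ z ∈ ball (0:ℂ) 1, ψ (g z) = z := fun z hz =>
    hginj.leftInvOn_invFunOn hz
  have hright : ∀ w ∈ g '' ball 0 1, g (ψ w) = w := by
    rintro w ⟨z, hz, rfl⟩
    exact Function.invFunOn_eq ⟨z, hz, rfl⟩
  have hmem : ∀ w ∈ g '' ball 0 1, ψ w ∈ ball (0:ℂ) 1 := by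
    rintro w ⟨z, hz, rfl⟩
    exact Function.invFunOn_mem ⟨z, hz, rfl⟩
  -- continuity of ψ on the image
  have hcont : ContinuousOn ψ (g '' ball 0 1) := by
    rintro w₀ ⟨z₀, hz₀, rfl⟩
    have hψw₀ : ψ (g z₀) = z₀ := hleft z₀ hz₀
    rw [ContinuousWithinAt, hψw₀, _root_.tendsto_nhds]
    intro V hV hz₀V
    have hWopen : IsOpen (g '' (V ∩ ball 0 1)) :=
      hopen _ inter_subset_right (hV.inter isOpen_ball)
    have hWmem : g z₀ ∈ g '' (V ∩ ball 0 1) := ⟨z₀, ⟨hz₀V, hz₀⟩, rfl⟩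
    refine mem_nhdsWithin_of_mem_nhds (Filter.mem_of_superset (hWopen.mem_nhds hWmem) ?_)
    rintro _ ⟨z, ⟨hzV, hzb⟩, rfl⟩
    simpa [Set.mem_preimage, hleft z hzb] using hzV
  -- derivative of g is analytic
  have hdna : AnalyticOnNhd ℂ (deriv g) (ball 0 1) := hga.deriv
  -- differentiability of ψ at points where deriv g ≠ 0
  have hdiffat : ∀ z ∈ ball (0:ℂ) 1, deriv g z ≠ 0 → DifferentiableAt ℂ ψ (g z) := by
    intro z hz hne
    obtain ⟨p, hp⟩ := hga z hz
    have hs : HasStrictDerivAt g (deriv g z) z := by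
      have := hp.hasStrictDerivAt
      rwa [← hp.deriv] at this
    have hfd := hs.hasStrictFDerivAt_equiv hne
    set li := hs.localInverse g _ z hne with hli_def
    have hli : DifferentiableAt ℂ li (g z) :=
      (hs.to_localInverse hne).hasDerivAt.differentiableAt
    have h1 : ∀ᶠ y in 𝓝 (g z), g (li y) = y := hfd.eventually_right_inverse
    have hlicont : ContinuousAt li (g z) := hfd.localInverse_continuousAt
    have hlival : li (g z) = z := hfd.localInverse_apply_image
    have h2 : ∀ᶠ y in 𝓝 (g z), li y ∈ ball (0:ℂ) 1 := by
      have := hlicont.preimage_mem_nhds (isOpen_ball.mem_nhds (by rw [hlival]; exact hz))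
      exact eventually_of_mem this fun y hy => hy
    have h3 : ∀ᶠ y in 𝓝 (g z), y ∈ g '' ball 0 1 :=
      eventually_of_mem (hΩopen.mem_nhds ⟨z, hz, rfl⟩) fun y hy => hy
    have heq : ψ =ᶠ[𝓝 (g z)] li := by
      filter_upwards [h1, h2, h3] with y hy1 hy2 hy3
      exact hginj (hmem y hy3) hy2 (by rw [hright y hy3, hy1])
    exact hli.congr_of_eventuallyEq heq
  -- differentiability of ψ everywhere on the image
  refine ⟨ψ, hΩopen, ?_, hleft, hmem⟩
  rintro w₀ ⟨z₀, hz₀, rfl⟩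
  refine DifferentiableAt.differentiableWithinAt ?_
  by_cases hzero : deriv g z₀ = 0
  swap
  · exact hdiffat z₀ hz₀ hzero
  -- isolated zero of deriv g at z₀
  have hisol : ∀ᶠ z in 𝓝[≠] z₀, deriv g z ≠ 0 := by
    rcases (hdna z₀ hz₀).eventually_eq_zero_or_eventually_ne_zero with hcase | hcase
    · exfalso
      have hball : ∀ᶠ z in 𝓝 z₀, deriv g z = 0 ∧ z ∈ ball (0:ℂ) 1 :=
        hcase.and (eventually_of_mem (isOpen_ball.mem_nhds hz₀) fun z hz => hz)
      obtain ⟨δ, hδpos, hδ⟩ := Metric.eventually_nhds_iff_ball.mp hball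
      have hsub : ball z₀ δ ⊆ ball (0:ℂ) 1 := fun z hz => (hδ z hz).2
      refine hnc z₀ δ hδpos hsub fun z hz => ?_
      have hdiff : DifferentiableOn ℂ g (ball z₀ δ) := hg.mono hsub
      refine (convex_ball z₀ δ).is_const_of_fderivWithin_eq_zero hdiff ?_ hz (mem_ball_self hδpos)
      intro x hx
      have hdx : DifferentiableAt ℂ g x := hg.differentiableAt (isOpen_ball.mem_nhds (hsub hx))
      have : HasDerivAt g 0 x := by
        have := hdx.hasDerivAt
        rwa [(hδ x hx).1] at this
      rw [fderivWithin_of_isOpen isOpen_ball hx]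
      exact (this.hasFDerivAt.fderiv).trans (by ext y; simp)
    · exact hcase
  obtain ⟨δ, hδpos, hδ⟩ : ∃ δ > 0, ∀ z ∈ ball z₀ δ, z ≠ z₀ → deriv g z ≠ 0 ∧ z ∈ ball (0:ℂ) 1 := by
    have h' : ∀ᶠ z in 𝓝 z₀, z ≠ z₀ → (deriv g z ≠ 0 ∧ z ∈ ball (0:ℂ) 1) := by
      have hb : ∀ᶠ z in 𝓝 z₀, z ∈ ball (0:ℂ) 1 :=
        eventually_of_mem (isOpen_ball.mem_nhds hz₀) fun z hz => hz
      filter_upwards [eventually_nhdsWithin_iff.mp hisol, hb] with z h1 h2 h3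
      exact ⟨h1 h3, h2⟩
    obtain ⟨δ, hδpos, hδ⟩ := Metric.eventually_nhds_iff_ball.mp h'
    exact ⟨δ, hδpos, fun z hz hne => hδ z hz hne⟩
  have hδsub : ball z₀ δ ⊆ ball (0:ℂ) 1 := by
    intro z hz
    by_cases hzz : z = z₀
    · rwa [hzz]
    · exact (hδ z hz hzz).2
  have hUopen : IsOpen (g '' ball z₀ δ) := hopen _ hδsub isOpen_ball
  have hUnhds : g '' ball z₀ δ ∈ 𝓝 (g z₀) := hUopen.mem_nhds ⟨z₀, mem_ball_self hδpos, rfl⟩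
  have hDcompl : DifferentiableOn ℂ ψ ((g '' ball z₀ δ) \ {g z₀}) := by
    rintro y ⟨⟨ζ, hζ, rfl⟩, hyne⟩
    have hζne : ζ ≠ z₀ := by
      intro h; exact hyne (by rw [h]; exact rfl)
    exact (hdiffat ζ (hδsub hζ) (hδ ζ hζ hζne).1).differentiableWithinAt
  have hcontAt : ContinuousAt ψ (g z₀) :=
    hcont.continuousAt (hΩopen.mem_nhds ⟨z₀, hz₀, rfl⟩)
  have := (Complex.differentiableOn_compl_singleton_and_continuousAt_iff hUnhds).mp
    ⟨hDcompl, hcontAt⟩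
  exact this.differentiableAt hUnhds

theorem rogosinski_convex_subordination (g φ f0 : ℂ → ℂ) (a : ℕ → ℂ)
    (hg : DifferentiableOn ℂ g (ball 0 1))
    (hginj : Set.InjOn g (ball 0 1))
    (hconv : Convex ℝ ((fun z => g z) '' (ball 0 1)))
    (hg0 : g 0 = 0)
    (hφ : DifferentiableOn ℂ φ (ball 0 1))
    (hφmap : ∀ z ∈ ball (0:ℂ) 1, φ z ∈ ball (0:ℂ) 1)
    (hφ0 : φ 0 = 0)
    (hsub : ∀ z ∈ ball (0:ℂ) 1, f0 z = g (φ z))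
    (hf00 : f0 0 = 0)
    (ha : ∀ z ∈ ball (0:ℂ) 1, HasSum (fun n => a n * z ^ n) (f0 z)) :
    (∀ n, 1 ≤ n → ‖a n‖ ≤ ‖deriv g 0‖) ∧
    (∀ r : ℝ, 0 ≤ r → r < 1 →
      majorant a r ≤ ENNReal.ofReal (‖deriv g 0‖ * r / (1 - r))) := by
  have h0D : (0:ℂ) ∈ ball (0:ℂ) 1 := mem_ball_self one_pos
  have ha0 : a 0 = 0 := by
    have h := ha 0 h0D
    have heqf : (fun m : ℕ => a m * (0:ℂ) ^ m) = fun m => if m = 0 then a 0 else 0 := by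
      funext m; rcases m with _ | m <;> simp
    rw [heqf] at h
    have h' : HasSum (fun m : ℕ => if m = 0 then a 0 else 0) (a 0) := hasSum_ite_eq 0 (a 0)
    have := h'.unique h
    rwa [hf00] at this
  obtain ⟨ψ, hΩopen, hψdiff, hψleft, hψmem⟩ := rog_inv g hg hginj
  have h0Ω : (0:ℂ) ∈ g '' ball 0 1 := ⟨0, h0D, hg0⟩
  have hψ0 : ψ 0 = 0 := by
    have := hψleft 0 h0D
    rwa [hg0] at this
  have hgd : DifferentiableAt ℂ g 0 := hg.differentiableAt (isOpen_ball.mem_nhds h0D)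
  have hψd0 : DifferentiableAt ℂ ψ 0 := hψdiff.differentiableAt (hΩopen.mem_nhds h0Ω)
  have hid : deriv ψ 0 * deriv g 0 = 1 := by
    have hev : (fun z => ψ (g z)) =ᶠ[𝓝 (0:ℂ)] id :=
      eventually_of_mem (isOpen_ball.mem_nhds h0D) fun z hz => hψleft z hz
    have hψdg : DifferentiableAt ℂ ψ (g 0) := by rwa [hg0]
    have h1 : deriv (fun z => ψ (g z)) 0 = deriv ψ (g 0) * deriv g 0 :=
      deriv_comp (x := 0) hψdg hgd
    have h2 := hev.deriv_eq
    rw [h1, hg0] at h2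
    simpa using h2
  have hbound : ∀ n : ℕ, 1 ≤ n → ‖a n‖ ≤ ‖deriv g 0‖ := by
    intro n hn
    have hn0 : (n:ℂ) ≠ 0 := Nat.cast_ne_zero.mpr (by omega)
    set ε : ℂ := Complex.exp (2 * Real.pi * Complex.I / n) with hε
    have hprim : IsPrimitiveRoot ε n := Complex.isPrimitiveRoot_exp n (by omega)
    have hεn : ε ^ n = 1 := hprim.pow_eq_one
    have hεabs : ‖ε‖ = 1 := by
      have h1 : ‖ε‖ ^ n = 1 := by rw [← norm_pow, hεn, norm_one]
      rcases lt_trichotomy ‖ε‖ 1 with h | h | h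
      · nlinarith [pow_lt_one₀ (norm_nonneg ε) h (by omega : n ≠ 0)]
      · exact h
      · nlinarith [one_lt_pow₀ h (by omega : n ≠ 0)]
    have hrou : ∀ m : ℕ, ∑ k ∈ Finset.range n, (ε ^ m) ^ k = if n ∣ m then (n:ℂ) else 0 := by
      intro m
      by_cases hd : n ∣ m
      · rw [if_pos hd]
        have h1 : ε ^ m = 1 := (hprim.pow_eq_one_iff_dvd m).mpr hd
        simp [h1]
      · rw [if_neg hd]
        have h1 : ε ^ m ≠ 1 := fun h => hd ((hprim.pow_eq_one_iff_dvd m).mp h)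
        rw [geom_sum_eq h1]
        have h2 : (ε ^ m) ^ n = 1 := by rw [← pow_mul, mul_comm, pow_mul, hεn, one_pow]
        rw [h2, sub_self, zero_div]
    have key : ∀ z ∈ ball (0:ℂ) 1,
        HasSum (fun j => a (n * j) * (z ^ n) ^ j)
          ((n:ℂ)⁻¹ * ∑ k ∈ Finset.range n, f0 (ε ^ k * z)) ∧
        ((n:ℂ)⁻¹ * ∑ k ∈ Finset.range n, f0 (ε ^ k * z)) ∈ g '' ball 0 1 := by
      intro z hz
      have hmemz : ∀ k : ℕ, ε ^ k * z ∈ ball (0:ℂ) 1 := by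
        intro k
        rw [mem_ball_zero_iff] at hz ⊢
        rw [norm_mul, norm_pow, hεabs, one_pow, one_mul]
        exact hz
      constructor
      · have h2 : HasSum (fun m => ∑ k ∈ Finset.range n, (n:ℂ)⁻¹ * (a m * (ε ^ k * z) ^ m))
            (∑ k ∈ Finset.range n, (n:ℂ)⁻¹ * f0 (ε ^ k * z)) :=
          hasSum_finsetSum fun k _ => (ha _ (hmemz k)).mul_left _
        have h3 : (fun m => ∑ k ∈ Finset.range n, (n:ℂ)⁻¹ * (a m * (ε ^ k * z) ^ m)) =
            fun m => if n ∣ m then a m * z ^ m else 0 := by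
          funext m
          have hps : ∀ k : ℕ, (ε ^ k * z) ^ m = (ε ^ m) ^ k * z ^ m := fun k => by
            rw [mul_pow, ← pow_mul, mul_comm k m, pow_mul]
          calc ∑ k ∈ Finset.range n, (n:ℂ)⁻¹ * (a m * (ε ^ k * z) ^ m)
              = ∑ k ∈ Finset.range n, ((n:ℂ)⁻¹ * (a m * z ^ m)) * (ε ^ m) ^ k := by
                refine Finset.sum_congr rfl fun k _ => ?_
                rw [hps k]; ring
            _ = ((n:ℂ)⁻¹ * (a m * z ^ m)) * ∑ k ∈ Finset.range n, (ε ^ m) ^ k := by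
                rw [Finset.mul_sum]
            _ = if n ∣ m then a m * z ^ m else 0 := by
                rw [hrou m]
                split_ifs with h
                · field_simp
                · ring
        rw [h3, ← Finset.mul_sum] at h2
        have hinj : Function.Injective (fun j : ℕ => n * j) := fun x y h => by
          simpa using Nat.eq_of_mul_eq_mul_left (by omega : 0 < n) h
        have hsupp : ∀ m, m ∉ Set.range (fun j : ℕ => n * j) →
            (if n ∣ m then a m * z ^ m else 0) = 0 := by
          intro m hm
          have : ¬ n ∣ m := by rintro ⟨j, rfl⟩; exact hm ⟨j, rfl⟩
          rw [if_neg this]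
        have h5 := (hinj.hasSum_iff hsupp).mpr h2
        have hcomp : ((fun m => if n ∣ m then a m * z ^ m else 0) ∘ fun j : ℕ => n * j)
            = fun j => a (n * j) * (z ^ n) ^ j := by
          funext j
          simp only [Function.comp_apply, if_pos (dvd_mul_right n j)]
          rw [← pow_mul]
        rwa [hcomp] at h5
      · have hrw : (n:ℂ)⁻¹ * ∑ k ∈ Finset.range n, f0 (ε ^ k * z)
            = ∑ k ∈ Finset.range n, ((n:ℝ)⁻¹) • g (φ (ε ^ k * z)) := by
          rw [Finset.mul_sum]
          refine Finset.sum_congr rfl fun k _ => ?_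
          rw [hsub _ (hmemz k), Complex.real_smul, Complex.ofReal_inv, Complex.ofReal_natCast]
        rw [hrw]
        refine hconv.sum_mem (fun k _ => by positivity) ?_
          (fun k _ => ⟨φ (ε ^ k * z), hφmap _ (hmemz k), rfl⟩)
        rw [Finset.sum_const, Finset.card_range, nsmul_eq_mul]
        have hnR : (n:ℝ) ≠ 0 := Nat.cast_ne_zero.mpr (by omega)
        field_simp
    set c : ℕ → ℂ := fun j => a (n * j) with hc
    set G : ℂ → ℂ := fun w => ∑' j, c j * w ^ j with hG
    have hroot : ∀ w ∈ ball (0:ℂ) 1, ∃ z ∈ ball (0:ℂ) 1, z ^ n = w := by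
      intro w hw
      obtain ⟨z, hz⟩ := IsAlgClosed.exists_pow_nat_eq w (n := n) (by omega)
      refine ⟨z, ?_, hz⟩
      rw [mem_ball_zero_iff] at hw ⊢
      by_contra hge
      push_neg at hge
      have h1 : (1:ℝ) ≤ ‖z‖ ^ n := by
        calc (1:ℝ) = 1 ^ n := (one_pow n).symm
        _ ≤ ‖z‖ ^ n := pow_le_pow_left₀ (by norm_num) hge n
      rw [← norm_pow, hz] at h1
      linarith
    have hGsum : ∀ w ∈ ball (0:ℂ) 1,
        HasSum (fun j => c j * w ^ j) (G w) ∧ G w ∈ g '' ball 0 1 := by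
      intro w hw
      obtain ⟨z, hzball, rfl⟩ := hroot w hw
      obtain ⟨hks, hkm⟩ := key z hzball
      have hGw : G (z ^ n) = (n:ℂ)⁻¹ * ∑ k ∈ Finset.range n, f0 (ε ^ k * z) := hks.tsum_eq
      exact ⟨hGw ▸ hks, hGw ▸ hkm⟩
    have hps := rog_ps fun w hw => (hGsum w hw).1
    have hGdiff : DifferentiableOn ℂ G (ball 0 1) := by
      have h := hps.differentiableOn
      rwa [show Metric.eball (0:ℂ) 1 = ball (0:ℂ) 1 from by
        simpa using Metric.emetric_ball_nnreal (x := (0:ℂ)) (ε := 1)] at h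
    have hG0 : G 0 = 0 := by
      have h := (hGsum 0 h0D).1
      have heqf : (fun j : ℕ => c j * (0:ℂ) ^ j) = fun j => if j = 0 then c 0 else 0 := by
        funext j; rcases j with _ | j <;> simp
      rw [heqf] at h
      have h' : HasSum (fun j : ℕ => if j = 0 then c 0 else 0) (c 0) := hasSum_ite_eq 0 (c 0)
      have hc0 : c 0 = G 0 := h'.unique h
      rw [← hc0, hc]
      simpa using ha0
    have hGderiv : deriv G 0 = a n := by
      have h := hps.hasFPowerSeriesAt.deriv
      rw [h]
      have h2 : (FormalMultilinearSeries.ofScalars ℂ c 1) (fun _ => 1) = c 1 := by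
        simp [FormalMultilinearSeries.ofScalars, List.prod_ofFn]
      rw [h2, hc]
      simp
    have hχdiff : DifferentiableOn ℂ (fun w => ψ (G w)) (ball 0 1) :=
      hψdiff.comp hGdiff fun w hw => (hGsum w hw).2
    have hχmaps : MapsTo (fun w => ψ (G w)) (ball 0 1) (ball 0 1) :=
      fun w hw => hψmem _ (hGsum w hw).2
    have hχ0 : (fun w => ψ (G w)) 0 = 0 := by
      show ψ (G 0) = 0
      rw [hG0, hψ0]
    have hSch := Complex.norm_deriv_le_one_of_mapsTo_ball hχdiff
      (fun w hw => by
        show ψ (G w) ∈ closedBall (ψ (G 0)) 1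
        rw [hG0, hψ0]
        exact ball_subset_closedBall (hχmaps hw)) one_pos
    have hGd0 : DifferentiableAt ℂ G 0 := hGdiff.differentiableAt (isOpen_ball.mem_nhds h0D)
    have hχderiv : deriv (fun w => ψ (G w)) 0 = deriv ψ 0 * deriv G 0 := by
      have hψdG : DifferentiableAt ℂ ψ (G 0) := by rwa [hG0]
      have h := deriv_comp (x := 0) hψdG hGd0
      rwa [hG0] at h
    calc ‖a n‖ = ‖deriv g 0 * (deriv ψ 0 * deriv G 0)‖ := by
          rw [show deriv g 0 * (deriv ψ 0 * deriv G 0)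
              = (deriv ψ 0 * deriv g 0) * deriv G 0 from by ring, hid, one_mul, hGderiv]
      _ = ‖deriv g 0‖ * ‖deriv ψ 0 * deriv G 0‖ := norm_mul _ _
      _ ≤ ‖deriv g 0‖ * 1 := by
          refine mul_le_mul_of_nonneg_left ?_ (norm_nonneg _)
          rw [← hχderiv]
          exact hSch
      _ = ‖deriv g 0‖ := mul_one _
  refine ⟨hbound, fun r hr0 hr1 => ?_⟩
  have hterm : ∀ m : ℕ, (‖a m‖₊ : ENNReal) * (ENNReal.ofReal r) ^ m ≤
      (if m = 0 then 0 else ENNReal.ofReal ‖deriv g 0‖ * (ENNReal.ofReal r) ^ m) := by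
    intro m
    rcases m with _ | m
    · simp [ha0]
    · simp only [if_neg (Nat.succ_ne_zero m)]
      refine mul_le_mul_left ?_ _
      rw [← ENNReal.ofReal_coe_nnreal, coe_nnnorm]
      exact ENNReal.ofReal_le_ofReal (hbound (m + 1) (by omega))
  rw [majorant]
  refine le_trans (ENNReal.tsum_le_tsum hterm) ?_
  have hsum : ∑' m : ℕ, (if m = 0 then 0 else ENNReal.ofReal ‖deriv g 0‖ * (ENNReal.ofReal r) ^ m)
      = ENNReal.ofReal ‖deriv g 0‖ * (ENNReal.ofReal r * (1 - ENNReal.ofReal r)⁻¹) := by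
    rw [tsum_eq_zero_add' ENNReal.summable]
    simp only [if_pos rfl, if_neg (Nat.succ_ne_zero _), zero_add]
    rw [ENNReal.tsum_mul_left, ENNReal.tsum_geometric_add_one]
    simp
  rw [hsum]
  apply le_of_eq
  have h1r : (0:ℝ) < 1 - r := by linarith
  rw [div_eq_mul_inv, ENNReal.ofReal_mul (by positivity), ENNReal.ofReal_mul (norm_nonneg _),
    ENNReal.ofReal_inv_of_pos h1r,
    show ENNReal.ofReal (1 - r) = 1 - ENNReal.ofReal r from by
      rw [ENNReal.ofReal_sub 1 hr0, ENNReal.ofReal_one]]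
  ring
end

section
/- Let f : 𝔻 → ℂ be analytic with |f(z)| ≤ 1 on 𝔻, and let φ : 𝔻 → 𝔻 be analytic with φ(0) = 0. Then the majorant series of f ∘ φ satisfies M_r(f∘φ) ≤ 1 for all 0 ≤ r ≤ 1/3. -/
open Metric Filter Real
open scoped ENNReal

set_option maxHeartbeats 1000000

lemma mobius_norm_le {a x : ℂ} (ha : ‖a‖ < 1) (hx : ‖x‖ ≤ 1) :
    ‖(x - a) / (1 - (starRingEnd ℂ) a * x)‖ ≤ 1 := by
  have hxsq : Complex.normSq x ≤ 1 := by
    rw [← Complex.sq_norm]; exact pow_le_one₀ (norm_nonneg x) hx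
  have hasq : Complex.normSq a ≤ 1 := by
    rw [← Complex.sq_norm]; exact pow_le_one₀ (norm_nonneg a) ha.le
  have hden : ‖(starRingEnd ℂ) a * x‖ < 1 := by
    rw [norm_mul, RCLike.norm_conj]
    calc ‖a‖ * ‖x‖ ≤ ‖a‖ * 1 := by
          exact mul_le_mul_of_nonneg_left hx (norm_nonneg a)
      _ < 1 := by simpa using ha
  have hden0 : (1 : ℂ) - (starRingEnd ℂ) a * x ≠ 0 := by
    intro h
    have : (1:ℂ) = (starRingEnd ℂ) a * x := by linear_combination h
    rw [← this] at hden; simp at hden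
  rw [norm_div, div_le_one (norm_pos_iff.mpr hden0)]
  have key : Complex.normSq (x - a) ≤ Complex.normSq (1 - (starRingEnd ℂ) a * x) := by
    simp only [Complex.normSq_apply, Complex.sub_re, Complex.sub_im, Complex.mul_re,
      Complex.mul_im, Complex.one_re, Complex.one_im, Complex.conj_re, Complex.conj_im]
    simp only [Complex.normSq_apply] at hxsq hasq
    nlinarith [sq_nonneg (x.re - a.re), sq_nonneg (x.im - a.im)]
  rw [Complex.norm_def, Complex.norm_def]
  exact Real.sqrt_le_sqrt key

lemma radius_ge_one {c : ℕ → ℂ} (n : ℕ) (hn : 0 < n)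
    (hc : ∀ s : ℝ, 0 ≤ s → s < 1 → Tendsto (fun k => ‖c k‖ * s ^ k) atTop (nhds 0)) :
    1 ≤ (FormalMultilinearSeries.ofScalars ℂ (fun m => c (m * n))).radius := by
  set p := FormalMultilinearSeries.ofScalars ℂ (fun m => c (m * n)) with hp
  apply ENNReal.le_of_forall_nnreal_lt
  intro r hr
  rw [ENNReal.coe_lt_one_iff] at hr
  -- choose s with r ≤ s^n, 0 ≤ s < 1, via Bernoulli
  set s : ℝ := 1 - (1 - (r:ℝ)) / n with hs
  have hr0 : (0:ℝ) ≤ r := r.coe_nonneg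
  have hr1 : (r:ℝ) < 1 := hr
  have hnpos : (0:ℝ) < n := by exact_mod_cast hn
  have hdle : (1 - (r:ℝ)) / n ≤ 1 := by
    rw [div_le_one hnpos]
    have : (1:ℝ) ≤ n := by exact_mod_cast hn
    linarith
  have hs0 : 0 ≤ s := by rw [hs]; linarith
  have hs1 : s < 1 := by
    rw [hs]
    have : 0 < (1 - (r:ℝ)) / n := div_pos (by linarith) hnpos
    linarith
  have hrs : (r:ℝ) ≤ s ^ n := by
    have := one_add_mul_le_pow (a := -((1 - (r:ℝ)) / n)) (by linarith) n
    have heq : (1 + -((1 - (r:ℝ)) / n)) = s := by rw [hs]; ring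
    rw [heq] at this
    calc (r:ℝ) = 1 + n * -((1 - (r:ℝ)) / n) := by field_simp; ring
      _ ≤ s ^ n := this
  -- tendsto of subsequence
  have htend : Tendsto (fun m => ‖p m‖ * (s ^ n) ^ m) atTop (nhds 0) := by
    have h1 : Tendsto (fun m : ℕ => m * n) atTop atTop :=
      tendsto_atTop_mono (fun m => Nat.le_mul_of_pos_right m hn) tendsto_id
    have h2 := (hc s hs0 hs1).comp h1
    refine h2.congr fun m => ?_
    simp only [Function.comp_apply, hp, FormalMultilinearSeries.ofScalars_norm]
    rw [← pow_mul, mul_comm n m]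
  have hsn : (0:ℝ) ≤ s ^ n := by positivity
  have := p.le_radius_of_tendsto (r := ⟨s ^ n, hsn⟩) (by exact_mod_cast htend)
  refine le_trans ?_ this
  exact ENNReal.coe_le_coe.mpr (NNReal.coe_le_coe.mp hrs)

lemma psum_bound {c : ℕ → ℂ} {g : ℂ → ℂ} (n : ℕ) (hn : 0 < n)
    (hsum : ∀ z ∈ ball (0:ℂ) 1, HasSum (fun k => c k * z ^ k) (g z))
    (hbd : ∀ z ∈ ball (0:ℂ) 1, ‖g z‖ ≤ 1)
    (hrad : 1 ≤ (FormalMultilinearSeries.ofScalars ℂ (fun m => c (m * n))).radius) :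
    ∀ w ∈ ball (0:ℂ) 1, ‖(FormalMultilinearSeries.ofScalars ℂ (fun m => c (m * n))).sum w‖ ≤ 1 := by
  intro w hw
  set p := FormalMultilinearSeries.ofScalars ℂ (fun m => c (m * n)) with hpdef
  rw [mem_ball_zero_iff] at hw
  -- n-th root of w
  set z : ℂ := w ^ ((n:ℂ)⁻¹) with hzdef
  have hzn : z ^ n = w := Complex.cpow_nat_inv_pow w hn.ne'
  have hz : ‖z‖ < 1 := by
    rw [hzdef, Complex.norm_cpow_inv_nat]
    rcases eq_or_ne w 0 with h | h
    · simp [h, Real.zero_rpow (by positivity : ((n:ℝ)⁻¹) ≠ 0)]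
    · exact Real.rpow_lt_one (norm_nonneg w) hw (by positivity)
  -- primitive root
  set ω : ℂ := Complex.exp (2 * Real.pi * Complex.I / n) with hωdef
  have hprim : IsPrimitiveRoot ω n := Complex.isPrimitiveRoot_exp n hn.ne'
  have hω1 : ‖ω‖ = 1 := by
    have h := congrArg norm hprim.pow_eq_one
    rw [norm_pow, norm_one] at h
    have h0 := norm_nonneg ω
    rcases lt_trichotomy ‖ω‖ 1 with hlt | heq | hgt
    · have := pow_lt_one₀ h0 hlt hn.ne'; rw [h] at this; linarith
    · exact heq
    · have := one_lt_pow₀ hgt hn.ne'; rw [h] at this; linarith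
  have hωz : ∀ j : ℕ, ω ^ j * z ∈ ball (0:ℂ) 1 := by
    intro j
    rw [mem_ball_zero_iff, norm_mul, norm_pow, hω1, one_pow, one_mul]
    exact hz
  have hncast : ((n:ℂ)) ≠ 0 := Nat.cast_ne_zero.mpr hn.ne'
  -- the averaged sum
  have hS2 : HasSum (fun k => if n ∣ k then c k * z ^ k else 0)
      ((n:ℂ)⁻¹ * ∑ j ∈ Finset.range n, g (ω ^ j * z)) := by
    have h1 : HasSum (fun k => ∑ j ∈ Finset.range n, c k * (ω ^ j * z) ^ k)
        (∑ j ∈ Finset.range n, g (ω ^ j * z)) :=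
      hasSum_sum fun j _ => hsum _ (hωz j)
    have h2 := h1.mul_left ((n:ℂ)⁻¹)
    have heq : (fun k => (n:ℂ)⁻¹ * ∑ j ∈ Finset.range n, c k * (ω ^ j * z) ^ k)
        = (fun k => if n ∣ k then c k * z ^ k else 0) := by
      funext k
      have hterm : ∀ j : ℕ, c k * (ω ^ j * z) ^ k = (ω ^ k) ^ j * (c k * z ^ k) := by
        intro j
        rw [mul_pow, ← pow_mul, mul_comm j k, pow_mul]
        ring
      rw [Finset.sum_congr rfl (fun j _ => hterm j), ← Finset.sum_mul]
      by_cases hd : n ∣ k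
      · rw [if_pos hd]
        have : ω ^ k = 1 := (hprim.pow_eq_one_iff_dvd k).mpr hd
        rw [this]
        simp [hncast]
      · rw [if_neg hd]
        have hne : ω ^ k ≠ 1 := fun h => hd ((hprim.pow_eq_one_iff_dvd k).mp h)
        rw [geom_sum_eq hne]
        have : (ω ^ k) ^ n = 1 := by
          rw [← pow_mul, mul_comm k n, pow_mul, hprim.pow_eq_one, one_pow]
        rw [this]
        simp
    rw [heq] at h2
    exact h2
  have hS1 : HasSum (fun k => if n ∣ k then c k * z ^ k else 0) (p.sum w) := by
    have hmem : w ∈ EMetric.ball (0:ℂ) p.radius := by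
      refine EMetric.ball_subset_ball hrad ?_
      rw [mem_emetric_ball_zero_iff]
      rw [← ofReal_norm, ENNReal.ofReal_lt_one]; exact hw
    have h := p.hasSum hmem
    have hinj : Function.Injective (fun m : ℕ => m * n) := fun a b hab =>
      Nat.eq_of_mul_eq_mul_right hn hab
    refine (Function.Injective.hasSum_iff hinj ?_).mp ?_
    · intro k hk
      rw [if_neg]
      intro hd
      obtain ⟨m, rfl⟩ := hd
      exact hk ⟨m, by simp [mul_comm]⟩
    · have hfe : ((fun k => if n ∣ k then c k * z ^ k else 0) ∘ (fun m : ℕ => m * n))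
          = fun m => p m (fun _ => w) := by
        funext m
        simp only [Function.comp_apply, if_pos (dvd_mul_left n m)]
        simp only [hpdef, FormalMultilinearSeries.ofScalars_apply_eq, smul_eq_mul]
        rw [← hzn, ← pow_mul, mul_comm n m]
      rw [hfe]
      exact h
  rw [hS1.unique hS2]
  rw [norm_mul, norm_inv, Complex.norm_natCast]
  calc ((n:ℝ))⁻¹ * ‖∑ j ∈ Finset.range n, g (ω ^ j * z)‖
      ≤ ((n:ℝ))⁻¹ * (n * 1) := by
        refine mul_le_mul_of_nonneg_left ?_ (by positivity)
        refine (norm_sum_le _ _).trans ?_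
        calc ∑ j ∈ Finset.range n, ‖g (ω ^ j * z)‖ ≤ ∑ _j ∈ Finset.range n, (1:ℝ) :=
              Finset.sum_le_sum fun j _ => hbd _ (hωz j)
          _ = n * 1 := by simp
    _ = 1 := by field_simp
lemma bohr_coeff {c : ℕ → ℂ} {g : ℂ → ℂ}
    (hsum : ∀ z ∈ ball (0:ℂ) 1, HasSum (fun k => c k * z ^ k) (g z))
    (hbd : ∀ z ∈ ball (0:ℂ) 1, ‖g z‖ ≤ 1)
    (h0 : ‖c 0‖ < 1) (n : ℕ) (hn : 0 < n) :
    ‖c n‖ ≤ 1 - ‖c 0‖ ^ 2 := by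
  have htend : ∀ s : ℝ, 0 ≤ s → s < 1 → Tendsto (fun k => ‖c k‖ * s ^ k) atTop (nhds 0) := by
    intro s hs0 hs1
    have hmem : (s:ℂ) ∈ ball (0:ℂ) 1 := by
      rw [mem_ball_zero_iff, Complex.norm_real, Real.norm_of_nonneg hs0]; exact hs1
    have h1 := ((hsum _ hmem).summable).tendsto_atTop_zero
    have h2 := h1.norm
    rw [norm_zero] at h2
    refine h2.congr fun k => ?_
    rw [norm_mul, norm_pow, Complex.norm_real, Real.norm_of_nonneg hs0]
  have hrad := radius_ge_one n hn htend
  set p := FormalMultilinearSeries.ofScalars ℂ (fun m => c (m * n)) with hpdef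
  set h : ℂ → ℂ := p.sum with hhdef
  have hbd_h : ∀ w ∈ ball (0:ℂ) 1, ‖h w‖ ≤ 1 := psum_bound n hn hsum hbd hrad
  have hp : HasFPowerSeriesOnBall h p 0 1 :=
    (p.hasFPowerSeriesOnBall (zero_lt_one.trans_le hrad)).mono one_pos hrad
  have hball : Metric.eball (0:ℂ) (1:ℝ≥0∞) = ball (0:ℂ) 1 := by
    rw [← ENNReal.coe_one, Metric.emetric_ball_nnreal, NNReal.coe_one]
  have hdiff : DifferentiableOn ℂ h (ball 0 1) := hball ▸ hp.differentiableOn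
  have hh0 : h 0 = c 0 := by
    have h1 := hp.hasSum (y := 0) (EMetric.mem_ball_self one_pos)
    have h2 : HasSum (fun m => p m fun _ => (0:ℂ)) (c 0) := by
      have heq : (fun m => p m fun _ => (0:ℂ)) = fun m => if m = 0 then c 0 else 0 := by
        funext m
        simp only [hpdef, FormalMultilinearSeries.ofScalars_apply_eq, smul_eq_mul]
        rcases m with _ | m
        · simp
        · simp [zero_pow]
      rw [heq]
      exact hasSum_ite_eq 0 (c 0)
    have := h1.unique h2
    simpa using this
  have hderiv : deriv h 0 = c n := by
    rw [hp.hasFPowerSeriesAt.deriv]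
    simp [hpdef, FormalMultilinearSeries.coeff_ofScalars]
  set a : ℂ := c 0 with hadef
  have ha : ‖a‖ < 1 := h0
  set F : ℂ → ℂ := fun w => (h w - a) / (1 - (starRingEnd ℂ) a * h w) with hFdef
  have hden : ∀ x : ℂ, ‖x‖ ≤ 1 → (1 : ℂ) - (starRingEnd ℂ) a * x ≠ 0 := by
    intro x hx hcontra
    have h1 : (1:ℂ) = (starRingEnd ℂ) a * x := by linear_combination hcontra
    have : (1:ℝ) ≤ ‖a‖ := by
      have := congrArg norm h1
      rw [norm_one, norm_mul, RCLike.norm_conj] at this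
      nlinarith [norm_nonneg a, norm_nonneg x]
    linarith
  have hF0 : F 0 = 0 := by
    rw [hFdef]; simp only [hh0, ← hadef, sub_self, zero_div]
  have hFdiff : DifferentiableOn ℂ F (ball 0 1) := by
    apply DifferentiableOn.div
    · exact hdiff.sub (differentiableOn_const a)
    · exact (differentiableOn_const 1).sub ((differentiableOn_const _).mul hdiff)
    · intro w hw
      exact hden _ (hbd_h w hw)
  have hFmaps : ∀ w ∈ ball (0:ℂ) 1, ‖F w‖ ≤ 1 := fun w hw =>
    mobius_norm_le ha (hbd_h w hw)
  -- Schwarz lemma with slightly larger target balls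
  have hFd1 : ‖deriv F 0‖ ≤ 1 := by
    refine le_of_forall_pos_le_add fun ε hε => ?_
    have hmaps : Set.MapsTo F (ball 0 1) (closedBall (F 0) (1 + ε)) := by
      intro w hw
      rw [hF0, mem_closedBall_zero_iff]
      exact (hFmaps w hw).trans (by linarith)
    have := Complex.norm_deriv_le_div_of_mapsTo_ball hFdiff hmaps one_pos
    rwa [div_one] at this
  -- compute deriv F 0
  have hhat : HasDerivAt h (c n) 0 := by
    have := (hdiff.differentiableAt (isOpen_ball.mem_nhds (mem_ball_self one_pos))).hasDerivAt
    rwa [hderiv] at this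
  have hd0 : (1 : ℂ) - (starRingEnd ℂ) a * h 0 ≠ 0 := by
    rw [hh0]
    exact hden a ha.le
  have hFat : HasDerivAt F ((c n * (1 - (starRingEnd ℂ) a * h 0) -
      (h 0 - a) * (0 - (starRingEnd ℂ) a * c n)) / (1 - (starRingEnd ℂ) a * h 0) ^ 2) 0 := by
    refine HasDerivAt.div (hhat.sub_const a) ?_ hd0
    exact (hasDerivAt_const (0:ℂ) (1:ℂ)).sub ((hhat.const_mul ((starRingEnd ℂ) a)))
  have hFval : deriv F 0 = c n / (1 - (starRingEnd ℂ) a * a) := by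
    rw [hFat.deriv, hh0]
    have hd : (1:ℂ) - (starRingEnd ℂ) a * a ≠ 0 := hden a ha.le
    field_simp
    ring
  have hnormden : ‖(1 : ℂ) - (starRingEnd ℂ) a * a‖ = 1 - ‖a‖ ^ 2 := by
    have habs : Complex.normSq a = ‖a‖ ^ 2 := by
      rw [Complex.normSq_eq_norm_sq]
    have heq : (1 : ℂ) - (starRingEnd ℂ) a * a = ((1 - Complex.normSq a : ℝ) : ℂ) := by
      rw [mul_comm, Complex.mul_conj]; push_cast; ring
    rw [heq, Complex.norm_real, Real.norm_of_nonneg (by nlinarith [norm_nonneg a, habs])]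
    rw [habs]
  have hpos : (0:ℝ) < 1 - ‖a‖ ^ 2 := by nlinarith [norm_nonneg a]
  have := hFd1
  rw [hFval, norm_div, hnormden, div_le_one hpos] at this
  simpa using this

theorem von_neumann_type_inequality (f φ : ℂ → ℂ) (c : ℕ → ℂ)
    (hf : DifferentiableOn ℂ f (ball 0 1))
    (hbd : ∀ z ∈ ball (0:ℂ) 1, ‖f z‖ ≤ 1)
    (hφ : DifferentiableOn ℂ φ (ball 0 1))
    (hφmap : ∀ z ∈ ball (0:ℂ) 1, φ z ∈ ball (0:ℂ) 1)
    (hφ0 : φ 0 = 0)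
    (hc : ∀ z ∈ ball (0:ℂ) 1, HasSum (fun n => c n * z ^ n) (f (φ z))) :
    ∀ r : ℝ, 0 ≤ r → r ≤ 1/3 → majorant c r ≤ 1 := by
  intro r hr0 hr3
  have hgbd : ∀ z ∈ ball (0:ℂ) 1, ‖f (φ z)‖ ≤ 1 := fun z hz => hbd _ (hφmap z hz)
  have hc0 : ‖c 0‖ ≤ 1 := by
    have h1 := hc 0 (mem_ball_self one_pos)
    have h2 : HasSum (fun k => c k * (0:ℂ) ^ k) (c 0) := by
      have heq : (fun k => c k * (0:ℂ) ^ k) = fun k => if k = 0 then c 0 else 0 := by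
        funext k
        rcases k with _ | k
        · simp
        · simp [zero_pow]
      rw [heq]
      exact hasSum_ite_eq 0 (c 0)
    rw [← h1.unique h2]
    exact hgbd 0 (mem_ball_self one_pos)
  have key : ∀ n : ℕ, 0 < n → ‖c n‖ ≤ 1 - ‖c 0‖ ^ 2 := by
    intro n hn
    have hstep : ∀ ε : ℝ, 0 < ε → ‖c n‖ ≤ (1 + ε) - ‖c 0‖ ^ 2 / (1 + ε) := by
      intro ε hε
      have ht : (0:ℝ) < 1 + ε := by linarith
      set u : ℝ := (1 + ε)⁻¹ with hu
      have hu0 : 0 < u := by positivity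
      have hu1 : u < 1 := by
        rw [hu]
        exact inv_lt_one_of_one_lt₀ (by linarith)
      have happ := bohr_coeff (c := fun k => (u:ℂ) * c k) (g := fun z => (u:ℂ) * f (φ z))
        (fun z hz => by simpa [mul_assoc] using (hc z hz).mul_left (u:ℂ))
        (fun z hz => by
          rw [norm_mul, Complex.norm_real, Real.norm_of_nonneg hu0.le]
          nlinarith [hgbd z hz, norm_nonneg (f (φ z))])
        (by
          rw [norm_mul, Complex.norm_real, Real.norm_of_nonneg hu0.le]
          nlinarith [norm_nonneg (c 0)]) n hn
      rw [norm_mul, norm_mul, Complex.norm_real, Real.norm_of_nonneg hu0.le] at happ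
      have h1 : (1 + ε) * ((1 + ε)⁻¹ * ‖c n‖) ≤ (1 + ε) * (1 - ((1 + ε)⁻¹ * ‖c 0‖) ^ 2) :=
        mul_le_mul_of_nonneg_left happ ht.le
      rw [← mul_assoc, mul_inv_cancel₀ ht.ne', one_mul] at h1
      have h2 : ((1 + ε)⁻¹ * ‖c 0‖) ^ 2 = ‖c 0‖ ^ 2 * ((1 + ε)⁻¹ * (1 + ε)⁻¹) := by ring
      rw [h2] at h1
      have h3 : (1 + ε) * (1 - ‖c 0‖ ^ 2 * ((1 + ε)⁻¹ * (1 + ε)⁻¹))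
          = (1 + ε) - ‖c 0‖ ^ 2 * (1 + ε)⁻¹ := by
        field_simp
      rw [h3] at h1
      calc ‖c n‖ ≤ (1 + ε) - ‖c 0‖ ^ 2 * (1 + ε)⁻¹ := h1
        _ = (1 + ε) - ‖c 0‖ ^ 2 / (1 + ε) := by rw [div_eq_mul_inv]
    have hlim : Tendsto (fun ε : ℝ => (1 + ε) - ‖c 0‖ ^ 2 / (1 + ε))
        (nhdsWithin 0 (Set.Ioi 0)) (nhds (1 - ‖c 0‖ ^ 2)) := by
      have hcont : ContinuousAt (fun ε : ℝ => (1 + ε) - ‖c 0‖ ^ 2 / (1 + ε)) 0 := by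
        refine ContinuousAt.sub (continuousAt_const.add continuousAt_id) ?_
        exact continuousAt_const.div (continuousAt_const.add continuousAt_id) (by norm_num)
      have h := hcont.tendsto
      norm_num at h
      exact h.mono_left nhdsWithin_le_nhds
    exact ge_of_tendsto hlim (eventually_nhdsWithin_of_forall fun ε hε => hstep ε hε)
  -- final summation bound
  have hgeom : Summable (fun k : ℕ => r ^ k) := summable_geometric_of_lt_one hr0 (by linarith)
  have hub : ∀ k, ‖c k‖ ≤ 1 := by
    intro k
    rcases Nat.eq_zero_or_pos k with hk | hk
    · rw [hk]; exact hc0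
    · nlinarith [key k hk, norm_nonneg (c 0)]
  have hsummable : Summable (fun k => ‖c k‖ * r ^ k) := by
    refine Summable.of_nonneg_of_le (fun k => by positivity) (fun k => ?_) hgeom
    calc ‖c k‖ * r ^ k ≤ 1 * r ^ k := mul_le_mul_of_nonneg_right (hub k) (by positivity)
      _ = r ^ k := one_mul _
  have hmaj : majorant c r = ENNReal.ofReal (∑' k, ‖c k‖ * r ^ k) := by
    rw [majorant, ENNReal.ofReal_tsum_of_nonneg (fun k => by positivity) hsummable]
    congr 1
    funext k
    rw [ENNReal.ofReal_mul (norm_nonneg _), ENNReal.ofReal_pow hr0, ← coe_nnnorm, ENNReal.ofReal_coe_nnreal]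
  have htailsum : Summable (fun k => ‖c (k + 1)‖ * r ^ (k + 1)) :=
    (summable_nat_add_iff 1).mpr hsummable
  have hgeom1 : Summable (fun k : ℕ => (1 - ‖c 0‖ ^ 2) * (r ^ k * r)) :=
    (hgeom.mul_right r).mul_left _
  have htail : ∑' k, ‖c (k + 1)‖ * r ^ (k + 1) ≤ (1 - ‖c 0‖ ^ 2) * ((1 - r)⁻¹ * r) := by
    have hle : ∀ k : ℕ, ‖c (k + 1)‖ * r ^ (k + 1) ≤ (1 - ‖c 0‖ ^ 2) * (r ^ k * r) := by
      intro k
      rw [pow_succ]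
      exact mul_le_mul_of_nonneg_right (key (k + 1) (Nat.succ_pos k)) (by positivity)
    calc ∑' k, ‖c (k + 1)‖ * r ^ (k + 1)
        ≤ ∑' k : ℕ, (1 - ‖c 0‖ ^ 2) * (r ^ k * r) := Summable.tsum_le_tsum hle htailsum hgeom1
      _ = (1 - ‖c 0‖ ^ 2) * ((1 - r)⁻¹ * r) := by
          rw [tsum_mul_left, tsum_mul_right, tsum_geometric_of_lt_one hr0 (by linarith)]
  have hsplit : ∑' k, ‖c k‖ * r ^ k
      = ‖c 0‖ * r ^ 0 + ∑' k, ‖c (k + 1)‖ * r ^ (k + 1) := Summable.tsum_eq_zero_add hsummable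
  have hR : (1 - r)⁻¹ * r ≤ 1 / 2 := by
    rw [inv_mul_le_iff₀ (by linarith : (0:ℝ) < 1 - r)]
    linarith
  have hR0 : (0:ℝ) ≤ (1 - r)⁻¹ * r :=
    mul_nonneg (inv_nonneg.mpr (by linarith)) hr0
  have hfinal : ∑' k, ‖c k‖ * r ^ k ≤ 1 := by
    rw [hsplit]
    have h1 : ‖c 0‖ * r ^ 0 = ‖c 0‖ := by simp
    rw [h1]
    have hA0 : 0 ≤ ‖c 0‖ := norm_nonneg _
    nlinarith [htail, mul_le_mul_of_nonneg_left hR (by nlinarith : (0:ℝ) ≤ 1 - ‖c 0‖ ^ 2),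
      sq_nonneg (1 - ‖c 0‖)]
  rw [hmaj, ← ENNReal.ofReal_one]
  exact ENNReal.ofReal_le_ofReal hfinal
end
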